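/- arXiv:1611.08327 — 2 statements merged into one kernel-verified Lean document; each statement's English description precedes it below -/
import Mathlib

section
/- Let φ: ℝ → ℝ be C¹ with φ' continuous, nondecreasing, and bounded on ℝ₊, let η_ref > 0, and suppose ℝ₊ is partitioned into m+1 consecutive intervals with m = ⌈ℓ(φ'(ℝ₊))/(2η_ref)⌉ − 1 ≥ 0, such that the image of φ' is uniformly divided (each interval's image under φ' has length ℓ(φ'(ℝ₊))/(m+1)). Define on each interval R_i the affine map q ↦ r_i q + s_i with r_i = (sup_{int R_i} φ' + inf_{int R_i} φ')/2, and choose s_i so that the resulting piecewise-affine function φ_PWA is continuous. Then ε = φ − φ_PWA is Lipschitz on ℝ₊ with constant η = ℓ(φ'(ℝ₊))/(2(m+1)) ≤ η_ref. -/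
open Set

lemma lip_glue {f : ℝ → ℝ} {K : NNReal} {s t : Set ℝ} {c : ℝ}
    (hcs : c ∈ s) (hct : c ∈ t) (hs : ∀ x ∈ s, x ≤ c) (ht : ∀ x ∈ t, c ≤ x)
    (h1 : LipschitzOnWith K f s) (h2 : LipschitzOnWith K f t) :
    LipschitzOnWith K f (s ∪ t) := by
  rw [lipschitzOnWith_iff_dist_le_mul] at *
  rintro x (hx | hx) y (hy | hy)
  · exact h1 x hx y hy
  · calc dist (f x) (f y) ≤ dist (f x) (f c) + dist (f c) (f y) := dist_triangle _ _ _
      _ ≤ K * dist x c + K * dist c y := add_le_add (h1 x hx c hcs) (h2 c hct y hy)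
      _ = K * (dist x c + dist c y) := by ring
      _ = K * dist x y := by
          have h1' := hs x hx; have h2' := ht y hy
          rw [Real.dist_eq, Real.dist_eq, Real.dist_eq, abs_of_nonpos (by linarith),
            abs_of_nonpos (by linarith), abs_of_nonpos (by linarith)]
          ring
  · calc dist (f x) (f y) ≤ dist (f x) (f c) + dist (f c) (f y) := dist_triangle _ _ _
      _ ≤ K * dist x c + K * dist c y := add_le_add (h2 x hx c hct) (h1 c hcs y hy)
      _ = K * (dist x c + dist c y) := by ring
      _ = K * dist x y := by
          have h1' := ht x hx; have h2' := hs y hy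
          rw [Real.dist_eq, Real.dist_eq, Real.dist_eq, abs_of_nonneg (by linarith),
            abs_of_nonneg (by linarith), abs_of_nonneg (by linarith)]
          ring
  · exact h2 x hx y hy

theorem uniform_partition_pwa_error_bound
    (φ : ℝ → ℝ) (hφ : ContDiff ℝ 1 φ)
    (hmono : MonotoneOn (deriv φ) (Ici (0 : ℝ)))
    (hbdd : BddAbove (deriv φ '' Ici (0 : ℝ)))
    (ηref : ℝ) (hηref : 0 < ηref)
    (L : ℝ)
    (hL : L = sSup (deriv φ '' Ici (0 : ℝ)) - sInf (deriv φ '' Ici (0 : ℝ)))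
    (m : ℕ) (hceil : 1 ≤ ⌈L / (2 * ηref)⌉₊) (hm : m = ⌈L / (2 * ηref)⌉₊ - 1)
    (a : ℕ → ℝ) (ha0 : a 0 = 0) (hainc : ∀ i < m, a i < a (i + 1))
    (R : ℕ → Set ℝ)
    (hR : ∀ i, R i = if i < m then Icc (a i) (a (i + 1)) else Ici (a i))
    (huniform : ∀ i ≤ m,
      sSup (deriv φ '' interior (R i)) - sInf (deriv φ '' interior (R i)) = L / (m + 1))
    (r s : ℕ → ℝ)
    (hr : ∀ i ≤ m,
      r i = (sSup (deriv φ '' interior (R i)) + sInf (deriv φ '' interior (R i))) / 2)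
    (φPWA : ℝ → ℝ)
    (hφPWA : ∀ i ≤ m, ∀ q ∈ R i, φPWA q = r i * q + s i)
    (hcontPWA : ContinuousOn φPWA (Ici (0 : ℝ))) :
    (∀ q ∈ Ici (0 : ℝ), ∀ q' ∈ Ici (0 : ℝ),
        |(φ q - φPWA q) - (φ q' - φPWA q')| ≤ (L / (2 * (m + 1))) * |q - q'|)
      ∧ L / (2 * (m + 1)) ≤ ηref := by
  have hderiv_cont : Continuous (deriv φ) := hφ.continuous_deriv le_rfl
  have hdiff : Differentiable ℝ φ := hφ.differentiable one_ne_zero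
  have hmpos : (0 : ℝ) < m + 1 := by positivity
  -- a is nonneg up to m
  have ha_nonneg : ∀ i, i ≤ m → 0 ≤ a i := by
    intro i
    induction i with
    | zero => intro _; simp [ha0]
    | succ n ih =>
      intro hi
      have hn : n < m := hi
      have := hainc n hn
      have := ih (le_of_lt hn)
      linarith
  -- interior of R i and closure facts
  have hRint : ∀ i ≤ m, interior (R i) = if i < m then Ioo (a i) (a (i + 1)) else Ioi (a i) := by
    intro i hi
    rw [hR i]
    by_cases h : i < m <;> simp [h, interior_Icc, interior_Ici]
  have hRclos : ∀ i ≤ m, R i ⊆ closure (interior (R i)) := by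
    intro i hi
    rw [hRint i hi, hR i]
    by_cases h : i < m
    · simp only [h, if_true]
      rw [closure_Ioo (ne_of_lt (hainc i h))]
    · simp only [h, if_false]
      rw [closure_Ioi]
  have hRsub : ∀ i ≤ m, R i ⊆ Ici (0 : ℝ) := by
    intro i hi x hx
    rw [hR i] at hx
    have h0 : 0 ≤ a i := ha_nonneg i hi
    by_cases h : i < m
    · simp only [h, if_true, mem_Icc] at hx; exact le_trans h0 hx.1
    · simp only [h, if_false, mem_Ici] at hx; exact le_trans h0 hx
  have hIntNe : ∀ i ≤ m, (interior (R i)).Nonempty := by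
    intro i hi
    rw [hRint i hi]
    by_cases h : i < m
    · simp only [h, if_true]; exact nonempty_Ioo.2 (hainc i h)
    · simp only [h, if_false]; exact nonempty_Ioi
  have hIntSub : ∀ i ≤ m, interior (R i) ⊆ Ici (0 : ℝ) :=
    fun i hi => (interior_subset).trans (hRsub i hi)
  -- bounds for each S i
  have hba : ∀ i ≤ m, BddAbove (deriv φ '' interior (R i)) := by
    intro i hi
    exact hbdd.mono (image_mono (hIntSub i hi))
  have hbb0 : BddBelow (deriv φ '' Ici (0 : ℝ)) := by
    refine ⟨deriv φ 0, ?_⟩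
    rintro y ⟨x, hx, rfl⟩
    exact hmono (self_mem_Ici) hx hx
  have hbb : ∀ i ≤ m, BddBelow (deriv φ '' interior (R i)) := by
    intro i hi
    exact hbb0.mono (image_mono (hIntSub i hi))
  -- key pointwise bound
  have hbound : ∀ i ≤ m, ∀ q ∈ R i,
      sInf (deriv φ '' interior (R i)) ≤ deriv φ q ∧
      deriv φ q ≤ sSup (deriv φ '' interior (R i)) := by
    intro i hi q hq
    set S := deriv φ '' interior (R i) with hS
    have hSne : S.Nonempty := (hIntNe i hi).image _
    have hSsub : S ⊆ Icc (sInf S) (sSup S) := by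
      intro y hy
      exact ⟨csInf_le (hbb i hi) hy, le_csSup (hba i hi) hy⟩
    have hclos : deriv φ q ∈ closure S := by
      have h1 : deriv φ q ∈ deriv φ '' closure (interior (R i)) :=
        mem_image_of_mem _ (hRclos i hi hq)
      exact image_closure_subset_closure_image hderiv_cont h1
    have := closure_minimal hSsub isClosed_Icc hclos
    exact ⟨this.1, this.2⟩
  -- the Lipschitz constant
  set η := L / (2 * (m + 1)) with hη
  have hLnn : 0 ≤ L := by
    have h0 := huniform 0 (Nat.zero_le m)
    have hSne := (hIntNe 0 (Nat.zero_le m)).image (deriv φ)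
    obtain ⟨y, hy⟩ := hSne
    have h1 : sInf (deriv φ '' interior (R 0)) ≤ y := csInf_le (hbb 0 (Nat.zero_le m)) hy
    have h2 : y ≤ sSup (deriv φ '' interior (R 0)) := le_csSup (hba 0 (Nat.zero_le m)) hy
    have h3 : 0 ≤ L / (m + 1) := by rw [← h0]; linarith
    have h4 : 0 ≤ L / (↑m + 1) * (↑m + 1) := mul_nonneg h3 (le_of_lt hmpos)
    rwa [div_mul_cancel₀ _ (ne_of_gt hmpos)] at h4
  have hηnn : 0 ≤ η := by positivity
  set K : NNReal := η.toNNReal with hK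
  have hKcast : (K : ℝ) = η := Real.coe_toNNReal _ hηnn
  -- Lipschitz on each R i
  have key : ∀ i ≤ m, LipschitzOnWith K (fun q => φ q - φPWA q) (R i) := by
    intro i hi
    have hconv : Convex ℝ (R i) := by
      rw [hR i]; by_cases h : i < m <;> simp [h, convex_Icc, convex_Ici]
    apply hconv.lipschitzOnWith_of_nnnorm_hasDerivWithin_le
      (f' := fun q => deriv φ q - r i)
    · intro x hx
      have h1 : HasDerivWithinAt φ (deriv φ x) (R i) x := (hdiff x).hasDerivAt.hasDerivWithinAt
      have h2 : HasDerivWithinAt φPWA (r i) (R i) x := by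
        have haff : HasDerivWithinAt (fun q => r i * q + s i) (r i) (R i) x := by
          simpa using ((hasDerivAt_id x).const_mul (r i)).add_const (s i) |>.hasDerivWithinAt
        exact haff.congr (fun y hy => hφPWA i hi y hy) (hφPWA i hi x hx)
      exact h1.sub h2
    · intro x hx
      rw [← NNReal.coe_le_coe, coe_nnnorm, hKcast, Real.norm_eq_abs]
      have hb := hbound i hi x hx
      have hri := hr i hi
      have hu := huniform i hi
      have hhalf : L / (2 * ((m : ℝ) + 1)) =
          (sSup (deriv φ '' interior (R i)) - sInf (deriv φ '' interior (R i))) / 2 := by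
        rw [hu, div_div, mul_comm]
      rw [abs_le, hη, hhalf]
      constructor <;> linarith [hb.1, hb.2, hri.ge, hri.le]
  -- Lipschitz on Icc 0 (a i) by induction
  have hQ : ∀ i, i ≤ m → LipschitzOnWith K (fun q => φ q - φPWA q) (Icc 0 (a i)) := by
    intro i
    induction i with
    | zero =>
      intro _
      rw [ha0]
      intro x hx y hy
      simp only [mem_Icc] at hx hy
      have : x = y := by linarith [hx.1, hx.2, hy.1, hy.2]
      simp [this]
    | succ n ih =>
      intro hi
      have hn : n < m := hi
      have hQn := ih (le_of_lt hn)
      have hRn : R n = Icc (a n) (a (n + 1)) := by rw [hR n]; simp [hn]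
      have hlipR : LipschitzOnWith K (fun q => φ q - φPWA q) (R n) := key n (le_of_lt hn)
      rw [hRn] at hlipR
      have han : 0 ≤ a n := ha_nonneg n (le_of_lt hn)
      have hle : a n ≤ a (n + 1) := le_of_lt (hainc n hn)
      have hglue := lip_glue (c := a n) (right_mem_Icc.2 han) (left_mem_Icc.2 hle)
        (fun x hx => hx.2) (fun x hx => hx.1) hQn hlipR
      have : Icc 0 (a n) ∪ Icc (a n) (a (n + 1)) = Icc 0 (a (n + 1)) :=
        Icc_union_Icc_eq_Icc han hle
      rwa [this] at hglue
  -- glue with final piece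
  have hRm : R m = Ici (a m) := by rw [hR m]; simp
  have hlipm := key m le_rfl
  rw [hRm] at hlipm
  have ham : 0 ≤ a m := ha_nonneg m le_rfl
  have hfull : LipschitzOnWith K (fun q => φ q - φPWA q) (Ici (0 : ℝ)) := by
    have hglue := lip_glue (c := a m) (right_mem_Icc.2 ham) self_mem_Ici
      (fun x hx => hx.2) (fun x hx => hx) (hQ m le_rfl) hlipm
    have : Icc 0 (a m) ∪ Ici (a m) = Ici (0 : ℝ) := Icc_union_Ici_eq_Ici ham
    rwa [this] at hglue
  constructor
  · intro q hq q' hq'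
    have := hfull.dist_le_mul q hq q' hq'
    rw [Real.dist_eq, Real.dist_eq, hKcast] at this
    exact this
  · -- η ≤ ηref
    have hm1 : (m : ℝ) + 1 = (⌈L / (2 * ηref)⌉₊ : ℝ) := by
      rw [hm]
      have : (⌈L / (2 * ηref)⌉₊ - 1 : ℕ) + 1 = ⌈L / (2 * ηref)⌉₊ := Nat.succ_pred_eq_of_pos hceil
      exact_mod_cast congrArg (Nat.cast : ℕ → ℝ) this
    have hceil_ge : L / (2 * ηref) ≤ (⌈L / (2 * ηref)⌉₊ : ℝ) := Nat.le_ceil _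
    rw [div_le_iff₀ (by positivity : (0:ℝ) < 2 * ηref)] at hceil_ge
    rw [hη, div_le_iff₀ (by positivity : (0:ℝ) < 2 * (m+1))]
    rw [hm1]
    nlinarith
end

section
/- Let φ: ℝ → ℝ be odd, C¹, with φ' nondecreasing and bounded on ℝ₊, and consider piecewise-affine continuous approximations φ_PWA of φ on partitions of ℝ₊ into m+1 consecutive intervals. Then the infimum over all such partitions and affine coefficients of the Lipschitz constant of ε = φ − φ_PWA on ℝ₊ equals ℓ(φ'(ℝ₊))/(2(m+1)), and it is attained by the partition uniformly dividing the image of φ' with slopes r_i = (sup_{int R_i} φ' + inf_{int R_i} φ')/2. -/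
open Set

/-- The set of Lipschitz constants on `ℝ₊` of the error `φ − φPWA` achievable by
continuous piecewise-affine approximations of `φ` on a partition of `ℝ₊` into
`m + 1` consecutive intervals. -/
def achievableLipConsts (φ : ℝ → ℝ) (m : ℕ) : Set ℝ :=
  {η : ℝ | ∃ (a : ℕ → ℝ) (r s : ℕ → ℝ) (φPWA : ℝ → ℝ),
    a 0 = 0 ∧ (∀ i < m, a i < a (i + 1)) ∧
    (∀ i < m, ∀ q ∈ Icc (a i) (a (i + 1)), φPWA q = r i * q + s i) ∧
    (∀ q ∈ Ici (a m), φPWA q = r m * q + s m) ∧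
    ContinuousOn φPWA (Ici (0 : ℝ)) ∧
    (∀ q ∈ Ici (0 : ℝ), ∀ q' ∈ Ici (0 : ℝ),
      |(φ q - φPWA q) - (φ q' - φPWA q')| ≤ η * |q - q'|)}


section Construction
variable {φ : ℝ → ℝ}

/-- The partition points: `a i` is the first point where `deriv φ` reaches
`deriv φ 0 + i * h2`. -/
lemma exists_partition (hφ : ContDiff ℝ 1 φ)
    (hmono : MonotoneOn (deriv φ) (Ici (0 : ℝ)))
    (hbdd : BddAbove (deriv φ '' Ici (0 : ℝ)))
    (m : ℕ) {L h2 : ℝ}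
    (hL : L = sSup (deriv φ '' Ici (0 : ℝ)) - deriv φ 0)
    (hh2 : h2 = L / (m + 1)) :
    ∃ a : ℕ → ℝ, a 0 = 0 ∧ (∀ i < m, a i < a (i + 1)) ∧
      (∀ i ≤ m, deriv φ (a i) = deriv φ 0 + i * h2) := by
  have hDc : Continuous (deriv φ) := hφ.continuous_deriv le_rfl
  have hub : ∀ x : ℝ, 0 ≤ x → deriv φ x ≤ sSup (deriv φ '' Ici (0:ℝ)) :=
    fun x hx => le_csSup hbdd (mem_image_of_mem _ hx)
  have hm1 : (0:ℝ) < (m:ℝ) + 1 := by positivity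
  have hLnn : 0 ≤ L := by rw [hL]; linarith [hub 0 le_rfl]
  rcases eq_or_lt_of_le hLnn with hL0 | hLpos
  · -- L = 0 : deriv φ is constant on ℝ₊
    have hconst : ∀ x : ℝ, 0 ≤ x → deriv φ x = deriv φ 0 := by
      intro x hx
      have h1 := hub x hx
      have h2 := hmono (self_mem_Ici) hx hx
      rw [hL] at hL0; linarith
    refine ⟨fun i => i, by norm_num, fun i _ => by show ((i:ℝ) < ((i+1:ℕ):ℝ)); exact_mod_cast Nat.lt_succ_self i, ?_⟩
    intro i _
    have hz : h2 = 0 := by rw [hh2, ← hL0]; simp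
    rw [hconst i (Nat.cast_nonneg i), hz]; ring
  · -- L > 0
    have hh2pos : 0 < h2 := by rw [hh2]; positivity
    set S := sSup (deriv φ '' Ici (0:ℝ)) with hS
    have hLsum : L = ((m:ℝ) + 1) * h2 := by rw [hh2]; field_simp
    set A : ℕ → Set ℝ := fun i => Ici 0 ∩ deriv φ ⁻¹' Ici (deriv φ 0 + i * h2) with hA
    have hclosed : ∀ i, IsClosed (A i) :=
      fun i => isClosed_Ici.inter (isClosed_Ici.preimage hDc)
    have hAne : ∀ i ≤ m, (A i).Nonempty := by
      intro i hi
      have hti : deriv φ 0 + (i:ℝ) * h2 < S := by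
        have : (i:ℝ) ≤ (m:ℝ) := by exact_mod_cast hi
        have : (i:ℝ) * h2 ≤ (m:ℝ) * h2 := by nlinarith
        rw [hL] at hLsum; nlinarith
      obtain ⟨y, ⟨x, hx, rfl⟩, hxy⟩ :=
        exists_lt_of_lt_csSup (⟨deriv φ 0, mem_image_of_mem _ self_mem_Ici⟩) hti
      exact ⟨x, hx, le_of_lt hxy⟩
    have hAbdd : ∀ i, BddBelow (A i) := fun i => ⟨0, fun x hx => hx.1⟩
    set a : ℕ → ℝ := fun i => sInf (A i) with ha
    have hmem : ∀ i ≤ m, a i ∈ A i := fun i hi =>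
      (hclosed i).csInf_mem (hAne i hi) (hAbdd i)
    have hval : ∀ i ≤ m, deriv φ (a i) = deriv φ 0 + i * h2 := by
      intro i hi
      have hge : deriv φ 0 + (i:ℝ) * h2 ≤ deriv φ (a i) := (hmem i hi).2
      have hnn : 0 ≤ a i := (hmem i hi).1
      rcases eq_or_lt_of_le hnn with h0 | h0
      · have : (0:ℝ) + (i:ℝ)*h2 ≤ 0 := by
          have := hge; rw [← h0] at this; linarith
        have hi0 : (i:ℝ) * h2 ≤ 0 := by linarith
        have hi0' : (0:ℝ) ≤ (i:ℝ) * h2 := by positivity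
        rw [← h0]; linarith
      · -- a i > 0 : approach from the left
        have hIco : Ico 0 (a i) ⊆ {x | deriv φ x ≤ deriv φ 0 + i * h2} := by
          intro x hx
          have : x ∉ A i := notMem_of_lt_csInf hx.2 (hAbdd i)
          have : ¬ (deriv φ 0 + (i:ℝ) * h2 ≤ deriv φ x) := fun hc => this ⟨hx.1, hc⟩
          exact le_of_lt (lt_of_not_ge this)
        have hcl : Icc 0 (a i) ⊆ {x | deriv φ x ≤ deriv φ 0 + i * h2} := by
          rw [← closure_Ico (ne_of_lt h0)]
          exact closure_minimal hIco (isClosed_le hDc continuous_const)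
        exact le_antisymm (hcl (right_mem_Icc.2 (le_of_lt h0))) hge
    refine ⟨a, ?_, ?_, hval⟩
    · -- a 0 = 0
      have h1 : (0:ℝ) ∈ A 0 := by
        constructor
        · exact self_mem_Ici
        · show deriv φ 0 + (0:ℕ) * h2 ≤ deriv φ 0
          simp
      exact le_antisymm (csInf_le (hAbdd 0) h1) (hmem 0 (Nat.zero_le m)).1
    · intro i hi
      by_contra hcon
      push_neg at hcon
      have h1 := hval i (le_of_lt hi)
      have h2' := hval (i+1) hi
      have hmle : deriv φ (a (i+1)) ≤ deriv φ (a i) :=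
        hmono (hmem (i+1) hi).1 (hmem i (le_of_lt hi)).1 hcon
      rw [h1, h2'] at hmle
      push_cast at hmle
      nlinarith

end Construction



/-- Glue two Lipschitz pieces meeting at a point `v`. -/
lemma lip_glue_s6 {ε : ℝ → ℝ} {h v : ℝ} {s t : Set ℝ}
    (hs : ∀ q ∈ s, ∀ q' ∈ s, |ε q - ε q'| ≤ h * |q - q'|)
    (ht : ∀ q ∈ t, ∀ q' ∈ t, |ε q - ε q'| ≤ h * |q - q'|)
    (hvs : v ∈ s) (hvt : v ∈ t)
    (hsv : ∀ x ∈ s, x ≤ v) (htv : ∀ y ∈ t, v ≤ y) :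
    ∀ q ∈ s ∪ t, ∀ q' ∈ s ∪ t, |ε q - ε q'| ≤ h * |q - q'| := by
  have key : ∀ x ∈ s, ∀ y ∈ t, |ε x - ε y| ≤ h * |x - y| := by
    intro x hx y hy
    have hxv := hs x hx v hvs
    have hvy := ht v hvt y hy
    have h1 : x ≤ v := hsv x hx
    have h2 : v ≤ y := htv y hy
    have e1 : |x - v| = v - x := by rw [abs_sub_comm]; exact abs_of_nonneg (by linarith)
    have e2 : |v - y| = y - v := by rw [abs_sub_comm]; exact abs_of_nonneg (by linarith)
    have e3 : |x - y| = y - x := by rw [abs_sub_comm]; exact abs_of_nonneg (by linarith)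
    calc |ε x - ε y| ≤ |ε x - ε v| + |ε v - ε y| := abs_sub_le _ _ _
      _ ≤ h * |x - v| + h * |v - y| := add_le_add hxv hvy
      _ = h * |x - y| := by rw [e1, e2, e3]; ring
  intro q hq q' hq'
  rcases hq with hq | hq <;> rcases hq' with hq' | hq'
  · exact hs q hq q' hq'
  · exact key q hq q' hq'
  · rw [abs_sub_comm (ε q), abs_sub_comm q]; exact key q' hq' q hq
  · exact ht q hq q' hq'

/-- sup/inf of continuous monotone function on an open interval in `ℝ₊`. -/
lemma sup_inf_Ioo {f : ℝ → ℝ} (hf : Continuous f) (hm : MonotoneOn f (Ici (0:ℝ)))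
    {u v : ℝ} (h0 : 0 ≤ u) (huv : u < v) :
    sSup (f '' Ioo u v) = f v ∧ sInf (f '' Ioo u v) = f u := by
  have hne : (Ioo u v).Nonempty := nonempty_Ioo.2 huv
  have hneI : (f '' Ioo u v).Nonempty := hne.image f
  have hub : ∀ y ∈ f '' Ioo u v, y ≤ f v := by
    rintro y ⟨x, hx, rfl⟩
    exact hm (le_trans h0 hx.1.le) (le_trans h0 huv.le) hx.2.le
  have hlbd : ∀ y ∈ f '' Ioo u v, f u ≤ y := by
    rintro y ⟨x, hx, rfl⟩
    exact hm h0 (le_trans h0 hx.1.le) hx.1.le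
  have hbA : BddAbove (f '' Ioo u v) := ⟨f v, hub⟩
  have hbB : BddBelow (f '' Ioo u v) := ⟨f u, hlbd⟩
  have hc1 : Icc u v ⊆ {x | f x ≤ sSup (f '' Ioo u v)} := by
    rw [← closure_Ioo huv.ne]
    exact closure_minimal (fun x hx => le_csSup hbA (mem_image_of_mem f hx))
      (isClosed_le hf continuous_const)
  have hc2 : Icc u v ⊆ {x | sInf (f '' Ioo u v) ≤ f x} := by
    rw [← closure_Ioo huv.ne]
    exact closure_minimal (fun x hx => csInf_le hbB (mem_image_of_mem f hx))
      (isClosed_le continuous_const hf)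
  exact ⟨le_antisymm (csSup_le hneI hub) (hc1 (right_mem_Icc.2 huv.le)),
    le_antisymm (hc2 (left_mem_Icc.2 huv.le)) (le_csInf hneI hlbd)⟩

/-- sup/inf of continuous monotone bounded function on a final open interval in `ℝ₊`. -/
lemma sup_inf_Ioi {f : ℝ → ℝ} (hf : Continuous f) (hm : MonotoneOn f (Ici (0:ℝ)))
    (hbdd : BddAbove (f '' Ici (0:ℝ))) {w : ℝ} (h0 : 0 ≤ w) :
    sSup (f '' Ioi w) = sSup (f '' Ici (0:ℝ)) ∧ sInf (f '' Ioi w) = f w := by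
  have hne : (Ioi w).Nonempty := nonempty_Ioi
  have hneI : (f '' Ioi w).Nonempty := hne.image f
  have hsub : f '' Ioi w ⊆ f '' Ici (0:ℝ) :=
    image_mono (fun x hx => le_trans h0 (le_of_lt hx))
  have hbA : BddAbove (f '' Ioi w) := hbdd.mono hsub
  have hlbd : ∀ y ∈ f '' Ioi w, f w ≤ y := by
    rintro y ⟨x, hx, rfl⟩
    exact hm h0 (le_trans h0 hx.le) hx.le
  have hbB : BddBelow (f '' Ioi w) := ⟨f w, hlbd⟩
  have hc1 : Ici w ⊆ {x | f x ≤ sSup (f '' Ioi w)} := by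
    rw [← closure_Ioi]
    exact closure_minimal (fun x hx => le_csSup hbA (mem_image_of_mem f hx))
      (isClosed_le hf continuous_const)
  have hc2 : Ici w ⊆ {x | sInf (f '' Ioi w) ≤ f x} := by
    rw [← closure_Ioi]
    exact closure_minimal (fun x hx => csInf_le hbB (mem_image_of_mem f hx))
      (isClosed_le continuous_const hf)
  constructor
  · refine le_antisymm (csSup_le_csSup hbdd hneI hsub) (csSup_le (⟨f 0, mem_image_of_mem f self_mem_Ici⟩) ?_)
    rintro y ⟨x, hx, rfl⟩
    rcases le_total x w with hxw | hwx
    · exact le_trans (hm hx h0 hxw) (hc1 self_mem_Ici)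
    · exact hc1 hwx
  · exact le_antisymm (hc2 self_mem_Ici) (le_csInf hneI hlbd)

/-- Converse MVT: an affine-corrected Lipschitz bound forces a derivative bound. -/
lemma abs_deriv_sub_le_of_lip {f F : ℝ → ℝ} {η c d : ℝ} (hη : 0 ≤ η) {x : ℝ} (hx : 0 < x)
    (hf : Differentiable ℝ f)
    (hF : ∀ᶠ y in nhds x, F y = c * y + d)
    (hlip : ∀ q ∈ Ici (0:ℝ), ∀ q' ∈ Ici (0:ℝ), |(f q - F q) - (f q' - F q')| ≤ η * |q - q'|) :
    |deriv f x - c| ≤ η := by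
  have h1 : HasDerivAt (fun y : ℝ => c * y + d) c x := by
    simpa using ((hasDerivAt_id x).const_mul c).add_const d
  have hg : HasDerivAt (fun q => f q - (c * q + d)) (deriv f x - c) x :=
    ((hf x).hasDerivAt).sub h1
  have hε : HasDerivAt (fun q => f q - F q) (deriv f x - c) x := by
    refine hg.congr_of_eventuallyEq ?_
    filter_upwards [hF] with y hy
    rw [hy]
  have hεF : HasFDerivAt (fun q => f q - F q)
      (ContinuousLinearMap.smulRight (1 : ℝ →L[ℝ] ℝ) (deriv f x - c)) x :=
    hasDerivAt_iff_hasFDerivAt.mp hε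
  have hev : ∀ᶠ y in nhds x, ‖(f y - F y) - (f x - F x)‖ ≤ η * ‖y - x‖ := by
    filter_upwards [Ioi_mem_nhds hx] with y hy
    simpa [Real.norm_eq_abs] using hlip y (mem_Ici.2 (le_of_lt (mem_Ioi.1 hy))) x hx.le
  have hnorm := hεF.le_of_lip' hη hev
  calc |deriv f x - c| = ‖(ContinuousLinearMap.smulRight (1 : ℝ →L[ℝ] ℝ) (deriv f x - c)) 1‖ := by
        simp
    _ ≤ ‖ContinuousLinearMap.smulRight (1 : ℝ →L[ℝ] ℝ) (deriv f x - c)‖ * ‖(1:ℝ)‖ :=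
        ContinuousLinearMap.le_opNorm _ 1
    _ ≤ η := by simpa using hnorm

lemma package {φ : ℝ → ℝ} (hφ : ContDiff ℝ 1 φ)
    (hmono : MonotoneOn (deriv φ) (Ici (0 : ℝ)))
    (hbdd : BddAbove (deriv φ '' Ici (0 : ℝ)))
    (m : ℕ) {L h2 : ℝ}
    (hL : L = sSup (deriv φ '' Ici (0 : ℝ)) - deriv φ 0)
    (hh2 : h2 = L / (m + 1))
    (a : ℕ → ℝ) (ha0 : a 0 = 0) (hainc : ∀ i < m, a i < a (i + 1))
    (haval : ∀ i ≤ m, deriv φ (a i) = deriv φ 0 + i * h2) :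
    ∃ (r s : ℕ → ℝ) (φPWA : ℝ → ℝ),
      (∀ i ≤ m, r i = deriv φ (a i) + h2 / 2) ∧
      (∀ i < m, ∀ q ∈ Icc (a i) (a (i + 1)), φPWA q = r i * q + s i) ∧
      (∀ q ∈ Ici (a m), φPWA q = r m * q + s m) ∧
      ContinuousOn φPWA (Ici (0 : ℝ)) ∧
      (∀ q ∈ Ici (0 : ℝ), ∀ q' ∈ Ici (0 : ℝ),
        |(φ q - φPWA q) - (φ q' - φPWA q')| ≤ (L / (2 * (m + 1))) * |q - q'|) := by
  have hdiff : Differentiable ℝ φ := hφ.differentiable one_ne_zero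
  have hub : ∀ x : ℝ, 0 ≤ x → deriv φ x ≤ sSup (deriv φ '' Ici (0:ℝ)) :=
    fun x hx => le_csSup hbdd (mem_image_of_mem _ hx)
  have hm1 : (0:ℝ) < (m:ℝ) + 1 := by positivity
  have hLnn : 0 ≤ L := by rw [hL]; linarith [hub 0 le_rfl]
  set h : ℝ := L / (2 * (m + 1)) with hhdef
  have hh : 0 ≤ h := by positivity
  have hh2h : h2 = 2 * h := by rw [hh2, hhdef]; field_simp
  have hLsum : L = ((m:ℝ) + 1) * h2 := by rw [hh2]; field_simp
  -- basic facts about a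
  have hann : ∀ i ≤ m, 0 ≤ a i := by
    intro i
    induction i with
    | zero => intro _; rw [ha0]
    | succ n ih =>
      intro hn
      have h1 := hainc n (Nat.lt_of_succ_le hn)
      have h2 := ih (le_of_lt (Nat.lt_of_succ_le hn))
      linarith
  have hamono : ∀ i j : ℕ, i ≤ j → j ≤ m → a i ≤ a j := by
    intro i j hij hjm
    induction j with
    | zero => interval_cases i; rfl
    | succ n ih =>
      rcases Nat.eq_or_lt_of_le hij with h | h
      · rw [h]
      · have h1 := hainc n (Nat.lt_of_succ_le hjm)
        have h2 := ih (Nat.lt_succ_iff.mp h) (le_of_lt (Nat.lt_of_succ_le hjm))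
        linarith
  -- definitions
  set r : ℕ → ℝ := fun i => deriv φ (a i) + h2 / 2 with hrdef
  set s : ℕ → ℝ := fun k => φ 0 - ∑ j ∈ Finset.range k, (r (j+1) - r j) * a (j+1) with hsdef
  set φPWA : ℝ → ℝ := fun q =>
    r 0 * q + φ 0 + ∑ i ∈ Finset.range m, (r (i+1) - r i) * max (q - a (i+1)) 0 with hPdef
  -- the piecewise-affine identity
  have hpiece : ∀ k ≤ m, ∀ q : ℝ, (∀ j < k, a (j+1) ≤ q) → (∀ j, k ≤ j → j < m → q ≤ a (j+1)) →
      φPWA q = r k * q + s k := by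
    intro k hk q hlow hhigh
    have hsum : ∑ i ∈ Finset.range m, (r (i+1) - r i) * max (q - a (i+1)) 0
        = ∑ i ∈ Finset.range k, (r (i+1) - r i) * (q - a (i+1)) := by
      rw [← Finset.sum_subset (Finset.range_subset_range.2 hk)
        (fun i hi hni => ?_)]
      · refine Finset.sum_congr rfl (fun i hi => ?_)
        rw [Finset.mem_range] at hi
        rw [max_eq_left (by linarith [hlow i hi])]
      · rw [Finset.mem_range] at hi hni
        push_neg at hni
        rw [max_eq_right (by linarith [hhigh i hni hi])]
        ring
    have htel : ∑ i ∈ Finset.range k, (r (i+1) - r i) * (q - a (i+1))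
        = (r k - r 0) * q - ∑ i ∈ Finset.range k, (r (i+1) - r i) * a (i+1) := by
      simp only [mul_sub]
      rw [Finset.sum_sub_distrib, ← Finset.sum_mul, Finset.sum_range_sub]
    show r 0 * q + φ 0 + _ = _
    rw [hsum, htel, hsdef]
    ring
  have hIccP : ∀ k < m, ∀ q ∈ Icc (a k) (a (k+1)), φPWA q = r k * q + s k := by
    intro k hk q hq
    refine hpiece k (le_of_lt hk) q (fun j hj => le_trans ?_ hq.1)
      (fun j hkj hjm => le_trans hq.2 ?_)
    · exact hamono (j+1) k hj (le_of_lt hk)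
    · exact hamono (k+1) (j+1) (Nat.succ_le_succ hkj) (Nat.succ_le_of_lt hjm)
  have hIciP : ∀ q ∈ Ici (a m), φPWA q = r m * q + s m := by
    intro q hq
    refine hpiece m le_rfl q (fun j hj => le_trans (hamono (j+1) m hj le_rfl) hq)
      (fun j hkj hjm => absurd (lt_of_le_of_lt hkj hjm) (lt_irrefl m))
  have hcont : Continuous φPWA := by
    refine ((continuous_const.mul continuous_id).add continuous_const).add ?_
    exact continuous_finset_sum _ fun i _ =>
      continuous_const.mul ((continuous_id.sub continuous_const).max continuous_const)
  -- Lipschitz on a convex piece with slope bound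
  have lip_piece : ∀ (c d : ℝ) (P : Set ℝ), Convex ℝ P →
      (∀ q ∈ P, φPWA q = c * q + d) → (∀ x ∈ P, |deriv φ x - c| ≤ h) →
      ∀ q ∈ P, ∀ q' ∈ P, |(φ q - φPWA q) - (φ q' - φPWA q')| ≤ h * |q - q'| := by
    intro c d P hconv haff hbound q hq q' hq'
    have hder : ∀ x ∈ P, HasDerivWithinAt (fun y => φ y - φPWA y) (deriv φ x - c) P x := by
      intro x hx
      have h1 : HasDerivAt (fun y : ℝ => c * y + d) c x := by
        simpa using ((hasDerivAt_id x).const_mul c).add_const d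
      have hg : HasDerivWithinAt (fun y => φ y - (c * y + d)) (deriv φ x - c) P x :=
        (((hdiff x).hasDerivAt).sub h1).hasDerivWithinAt
      exact hg.congr (fun y hy => by rw [haff y hy]) (by rw [haff x hx])
    have := hconv.norm_image_sub_le_of_norm_hasDerivWithin_le hder
      (fun x hx => by simpa [Real.norm_eq_abs] using hbound x hx) hq' hq
    simpa [Real.norm_eq_abs] using this
  -- slope bounds on the pieces
  have hbIcc : ∀ k < m, ∀ x ∈ Icc (a k) (a (k+1)), |deriv φ x - r k| ≤ h := by
    intro k hk x hx
    have hx0 : (0:ℝ) ≤ x := le_trans (hann k (le_of_lt hk)) hx.1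
    have h1 : deriv φ (a k) ≤ deriv φ x := hmono (hann k (le_of_lt hk)) hx0 hx.1
    have h2' : deriv φ x ≤ deriv φ (a (k+1)) := hmono hx0 (hann (k+1) hk) hx.2
    rw [haval k (le_of_lt hk)] at h1
    rw [haval (k+1) hk] at h2'
    have hrk : r k = deriv φ 0 + (k:ℝ) * h2 + h2 / 2 := by
      rw [hrdef]; simp only; rw [haval k (le_of_lt hk)]
    push_cast at h2'
    rw [abs_le, hrk]
    constructor <;> linarith
  have hbIci : ∀ x ∈ Ici (a m), |deriv φ x - r m| ≤ h := by
    intro x hx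
    have hx0 : (0:ℝ) ≤ x := le_trans (hann m le_rfl) hx
    have h1 : deriv φ (a m) ≤ deriv φ x := hmono (hann m le_rfl) hx0 hx
    have h2' : deriv φ x ≤ sSup (deriv φ '' Ici (0:ℝ)) := hub x hx0
    rw [haval m le_rfl] at h1
    have hS : sSup (deriv φ '' Ici (0:ℝ)) = deriv φ 0 + ((m:ℝ)+1) * h2 := by
      rw [← hLsum]; rw [hL]; ring
    rw [hS] at h2'
    have hrm : r m = deriv φ 0 + (m:ℝ) * h2 + h2 / 2 := by
      rw [hrdef]; simp only; rw [haval m le_rfl]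
    rw [abs_le, hrm]
    constructor <;> linarith
  -- glue
  have hmain : ∀ k ≤ m, ∀ q ∈ Icc (0:ℝ) (a k), ∀ q' ∈ Icc (0:ℝ) (a k),
      |(φ q - φPWA q) - (φ q' - φPWA q')| ≤ h * |q - q'| := by
    intro k
    induction k with
    | zero =>
      intro _ q hq q' hq'
      rw [ha0] at hq hq'
      have hq0 : q = 0 := le_antisymm hq.2 hq.1
      have hq'0 : q' = 0 := le_antisymm hq'.2 hq'.1
      rw [hq0, hq'0]
      simp
    | succ n ih =>
      intro hn
      have hnm : n < m := Nat.lt_of_succ_le hn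
      have hnm' : n ≤ m := le_of_lt hnm
      have hcup : Icc (0:ℝ) (a n) ∪ Icc (a n) (a (n+1)) = Icc 0 (a (n+1)) :=
        Icc_union_Icc_eq_Icc (hann n hnm') (le_of_lt (hainc n hnm))
      have hglue := lip_glue_s6 (ih hnm')
        (lip_piece (r n) (s n) (Icc (a n) (a (n+1))) (convex_Icc _ _) (hIccP n hnm) (hbIcc n hnm))
        (right_mem_Icc.2 (hann n hnm')) (left_mem_Icc.2 (le_of_lt (hainc n hnm)))
        (fun x hx => hx.2) (fun y hy => hy.1)
      intro q hq q' hq'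
      rw [← hcup] at hq hq'
      exact hglue q hq q' hq'
  have hfin : Icc (0:ℝ) (a m) ∪ Ici (a m) = Ici 0 := Icc_union_Ici_eq_Ici (hann m le_rfl)
  have hglue := lip_glue_s6 (hmain m le_rfl)
    (lip_piece (r m) (s m) (Ici (a m)) (convex_Ici _) hIciP hbIci)
    (right_mem_Icc.2 (hann m le_rfl)) self_mem_Ici
    (fun x hx => hx.2) (fun y hy => hy)
  refine ⟨r, s, φPWA, fun i _ => rfl, hIccP, hIciP, hcont.continuousOn, ?_⟩
  intro q hq q' hq'
  rw [← hfin] at hq hq'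
  exact hglue q hq q' hq'

lemma lower_bound {φ : ℝ → ℝ} (hφ : ContDiff ℝ 1 φ)
    (hmono : MonotoneOn (deriv φ) (Ici (0 : ℝ)))
    (hbdd : BddAbove (deriv φ '' Ici (0 : ℝ)))
    (m : ℕ) {L : ℝ}
    (hL : L = sSup (deriv φ '' Ici (0 : ℝ)) - deriv φ 0) :
    ∀ η ∈ achievableLipConsts φ m, L / (2 * (m + 1)) ≤ η := by
  rintro η ⟨a, r, s, F, ha0, hainc, hIccF, hIciF, hFcont, hlip⟩
  have hdiff : Differentiable ℝ φ := hφ.differentiable one_ne_zero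
  have hDc : Continuous (deriv φ) := hφ.continuous_deriv le_rfl
  have hη0 : 0 ≤ η := by
    have h01 := hlip 1 (by norm_num) 0 self_mem_Ici
    have := le_trans (abs_nonneg _) h01
    simpa using this
  have hann : ∀ i ≤ m, 0 ≤ a i := by
    intro i
    induction i with
    | zero => intro _; rw [ha0]
    | succ n ih =>
      intro hn
      have h1 := hainc n (Nat.lt_of_succ_le hn)
      have h2 := ih (le_of_lt (Nat.lt_of_succ_le hn))
      linarith
  have keyIcc : ∀ i < m, ∀ x ∈ Icc (a i) (a (i+1)), |deriv φ x - r i| ≤ η := by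
    intro i hi
    have hopen : ∀ x ∈ Ioo (a i) (a (i+1)), |deriv φ x - r i| ≤ η := by
      intro x hx
      have hx0 : 0 < x := lt_of_le_of_lt (hann i (le_of_lt hi)) hx.1
      refine abs_deriv_sub_le_of_lip (d := s i) hη0 hx0 hdiff ?_ hlip
      filter_upwards [isOpen_Ioo.mem_nhds hx] with y hy
      exact hIccF i hi y ⟨hy.1.le, hy.2.le⟩
    have hclosed : IsClosed {x : ℝ | |deriv φ x - r i| ≤ η} :=
      isClosed_le ((hDc.sub continuous_const).abs) continuous_const
    intro x hx
    have : Icc (a i) (a (i+1)) ⊆ {x : ℝ | |deriv φ x - r i| ≤ η} := by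
      rw [← closure_Ioo (ne_of_lt (hainc i hi))]
      exact closure_minimal hopen hclosed
    exact this hx
  have keyIci : ∀ x ∈ Ici (a m), |deriv φ x - r m| ≤ η := by
    have hopen : ∀ x ∈ Ioi (a m), |deriv φ x - r m| ≤ η := by
      intro x hx
      have hx0 : 0 < x := lt_of_le_of_lt (hann m le_rfl) hx
      refine abs_deriv_sub_le_of_lip (d := s m) hη0 hx0 hdiff ?_ hlip
      filter_upwards [isOpen_Ioi.mem_nhds hx] with y hy
      exact hIciF y (mem_Ici.2 (le_of_lt (mem_Ioi.1 hy)))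
    have hclosed : IsClosed {x : ℝ | |deriv φ x - r m| ≤ η} :=
      isClosed_le ((hDc.sub continuous_const).abs) continuous_const
    intro x hx
    have : Ici (a m) ⊆ {x : ℝ | |deriv φ x - r m| ≤ η} := by
      rw [← closure_Ioi]
      exact closure_minimal hopen hclosed
    exact this hx
  have chain : ∀ k ≤ m, deriv φ (a k) ≤ deriv φ 0 + 2 * η * k := by
    intro k
    induction k with
    | zero => intro _; rw [ha0]; simp
    | succ n ih =>
      intro hn
      have hnm : n < m := Nat.lt_of_succ_le hn
      have e1 := keyIcc n hnm (a n) (left_mem_Icc.2 (hainc n hnm).le)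
      have e2 := keyIcc n hnm (a (n+1)) (right_mem_Icc.2 (hainc n hnm).le)
      rw [abs_le] at e1 e2
      have := ih (le_of_lt hnm)
      push_cast
      push_cast at this
      linarith [e1.1, e2.2]
  have hSle : sSup (deriv φ '' Ici (0:ℝ)) ≤ deriv φ (a m) + 2 * η := by
    refine csSup_le ⟨_, mem_image_of_mem _ self_mem_Ici⟩ ?_
    rintro y ⟨x, hx, rfl⟩
    rcases le_total x (a m) with hxm | hmx
    · have := hmono hx (hann m le_rfl) hxm
      linarith
    · have e1 := keyIci x hmx
      have e2 := keyIci (a m) self_mem_Ici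
      rw [abs_le] at e1 e2
      linarith [e1.2, e2.1]
  have hchain := chain m le_rfl
  rw [div_le_iff₀ (by positivity : (0:ℝ) < 2 * ((m:ℝ) + 1))]
  rw [hL]
  nlinarith [hSle, hchain]


theorem uniform_partition_is_optimal
    (φ : ℝ → ℝ) (hodd : Odd φ) (hφ : ContDiff ℝ 1 φ)
    (hmono : MonotoneOn (deriv φ) (Ici (0 : ℝ)))
    (hbdd : BddAbove (deriv φ '' Ici (0 : ℝ)))
    (m : ℕ) (L : ℝ)
    (hL : L = sSup (deriv φ '' Ici (0 : ℝ)) - sInf (deriv φ '' Ici (0 : ℝ))) :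
    sInf (achievableLipConsts φ m) = L / (2 * (m + 1)) ∧
    (∃ (a : ℕ → ℝ) (r s : ℕ → ℝ) (φPWA : ℝ → ℝ) (R : ℕ → Set ℝ),
      a 0 = 0 ∧ (∀ i < m, a i < a (i + 1)) ∧
      (∀ i, R i = if i < m then Icc (a i) (a (i + 1)) else Ici (a i)) ∧
      (∀ i ≤ m,
        sSup (deriv φ '' interior (R i)) - sInf (deriv φ '' interior (R i)) = L / (m + 1)) ∧
      (∀ i ≤ m,
        r i = (sSup (deriv φ '' interior (R i)) + sInf (deriv φ '' interior (R i))) / 2) ∧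
      (∀ i ≤ m, ∀ q ∈ R i, φPWA q = r i * q + s i) ∧
      ContinuousOn φPWA (Ici (0 : ℝ)) ∧
      (∀ q ∈ Ici (0 : ℝ), ∀ q' ∈ Ici (0 : ℝ),
        |(φ q - φPWA q) - (φ q' - φPWA q')| ≤ (L / (2 * (m + 1))) * |q - q'|)) := by
  have hDc : Continuous (deriv φ) := hφ.continuous_deriv le_rfl
  have hInf_img : sInf (deriv φ '' Ici (0:ℝ)) = deriv φ 0 := by
    refine IsLeast.csInf_eq ⟨mem_image_of_mem _ self_mem_Ici, ?_⟩
    rintro y ⟨x, hx, rfl⟩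
    exact hmono self_mem_Ici hx hx
  have hL' : L = sSup (deriv φ '' Ici (0:ℝ)) - deriv φ 0 := by rw [hL, hInf_img]
  obtain ⟨a, ha0, hainc, haval⟩ := exists_partition hφ hmono hbdd m hL' rfl
  obtain ⟨r, s, φPWA, hr, hIccP, hIciP, hcont, hlips⟩ :=
    package hφ hmono hbdd m hL' rfl a ha0 hainc haval
  have hann : ∀ i ≤ m, 0 ≤ a i := by
    intro i
    induction i with
    | zero => intro _; rw [ha0]
    | succ n ih =>
      intro hn
      have h1 := hainc n (Nat.lt_of_succ_le hn)
      have h2 := ih (le_of_lt (Nat.lt_of_succ_le hn))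
      linarith
  have hmem : (L / (2 * ((m:ℝ) + 1))) ∈ achievableLipConsts φ m :=
    ⟨a, r, s, φPWA, ha0, hainc, hIccP, hIciP, hcont, hlips⟩
  have hlow := lower_bound hφ hmono hbdd m hL'
  constructor
  · exact le_antisymm (csInf_le ⟨_, hlow⟩ hmem) (le_csInf ⟨_, hmem⟩ hlow)
  · refine ⟨a, r, s, φPWA,
      fun i => if i < m then Icc (a i) (a (i + 1)) else Ici (a i),
      ha0, hainc, fun i => rfl, ?_, ?_, ?_, hcont, hlips⟩
    · intro i hi
      by_cases hi' : i < m
      · simp only [if_pos hi', interior_Icc]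
        obtain ⟨hsup, hinf⟩ := sup_inf_Ioo hDc hmono (hann i (le_of_lt hi')) (hainc i hi')
        rw [hsup, hinf, haval i hi, haval (i+1) hi']
        push_cast
        ring
      · have him : i = m := le_antisymm hi (not_lt.mp hi')
        subst him
        simp only [if_neg hi', interior_Ici]
        obtain ⟨hsup, hinf⟩ := sup_inf_Ioi hDc hmono hbdd (hann i le_rfl)
        rw [hsup, hinf, haval i le_rfl]
        have hS : sSup (deriv φ '' Ici (0:ℝ)) = L + deriv φ 0 := by rw [hL']; ring
        rw [hS]
        have hm1 : ((i:ℝ) + 1) ≠ 0 := by positivity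
        field_simp
        ring
    · intro i hi
      by_cases hi' : i < m
      · simp only [if_pos hi', interior_Icc]
        obtain ⟨hsup, hinf⟩ := sup_inf_Ioo hDc hmono (hann i (le_of_lt hi')) (hainc i hi')
        rw [hsup, hinf, haval i hi, haval (i+1) hi', hr i hi, haval i hi]
        push_cast
        ring
      · have him : i = m := le_antisymm hi (not_lt.mp hi')
        subst him
        simp only [if_neg hi', interior_Ici]
        obtain ⟨hsup, hinf⟩ := sup_inf_Ioi hDc hmono hbdd (hann i le_rfl)
        rw [hsup, hinf, haval i le_rfl, hr i le_rfl, haval i le_rfl]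
        have hS : sSup (deriv φ '' Ici (0:ℝ)) = L + deriv φ 0 := by rw [hL']; ring
        rw [hS]
        have hm1 : ((i:ℝ) + 1) ≠ 0 := by positivity
        field_simp
        ring
    · intro i hi q hq
      by_cases hi' : i < m
      · simp only [if_pos hi'] at hq
        exact hIccP i hi' q hq
      · have him : i = m := le_antisymm hi (not_lt.mp hi')
        subst him
        simp only [if_neg hi'] at hq
        exact hIciP q hq
end
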